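/- In a chart with a LLEE-witness, if u ⇢* v ⇢* w (u loops back, in finitely many steps, to v, and v to w), then every path of body transitions from u to w visits v. -/

import Mathlib

/-- An entry/body-labeled finite chart: a rooted labelled transition system with
termination sink `tick` (√), start vertex `start`, and transitions carrying an
action from `A` together with a marking label in ℕ (label `0` marks body
transitions, positive labels mark entry transitions).  Every vertex other than
possibly `tick` is reachable from the start vertex. -/
structure LChart (V : Type) (A : Type) : Type where
  tick : V
  start : V
  Tr : V → A → ℕ → V → Prop
  tick_no_out : ∀ (a : A) (n : ℕ) (w : V), ¬ Tr tick a n w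
  start_ne_tick : start ≠ tick
  connected : ∀ v : V, v = tick ∨
    Relation.ReflTransGen (fun x y => ∃ (a : A) (n : ℕ), Tr x a n y) start v

namespace LChart

variable {V A : Type}

/-- Body transition step (marking label `0`). -/
def BStep (C : LChart V A) (x y : V) : Prop := ∃ a : A, C.Tr x a 0 y

/-- Entry transition step of level `α > 0`. -/
def EStep (C : LChart V A) (α : ℕ) (x y : V) : Prop := 0 < α ∧ ∃ a : A, C.Tr x a α y

/-- A transition step of any kind. -/
def AnyStep (C : LChart V A) (x y : V) : Prop := ∃ (a : A) (n : ℕ), C.Tr x a n y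

/-- There is an entry transition of level `α` departing from `v`. -/
def HasEntry (C : LChart V A) (v : V) (α : ℕ) : Prop :=
  0 < α ∧ ∃ (a : A) (w : V), C.Tr v a α w

/-- `v` descends in a loop of level `α` to `w`: there is a path from `v` to `w`
starting with an `α`-entry transition and continuing with body transitions, in
which all transition targets avoid `v`. -/
def Descends (C : LChart V A) (v : V) (α : ℕ) (w : V) : Prop :=
  ∃ u : V, C.EStep α v u ∧ u ≠ v ∧
    Relation.ReflTransGen (fun x y => C.BStep x y ∧ y ≠ v) u w

/-- `v` descends in a loop to `w` (at some level). -/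
def Desc (C : LChart V A) (v w : V) : Prop := ∃ α : ℕ, C.Descends v α w

/-- An infinite path from `v` in the loop subchart `C[v,α]`: it starts at `v`,
takes an `α`-entry transition whenever it is at `v`, and body transitions
otherwise. -/
def LoopSeq (C : LChart V A) (v : V) (α : ℕ) (f : ℕ → V) : Prop :=
  f 0 = v ∧ ∀ n : ℕ,
    (f n = v → C.EStep α (f n) (f (n + 1))) ∧ (f n ≠ v → C.BStep (f n) (f (n + 1)))

/-- The conditions (W1), (W2)(a) (the subchart `C[v,α]` is a loop chart, i.e.
(L1) an infinite path from `v` exists, (L2) every infinite path from `v`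
returns to `v` after a positive number of steps, (L3) √ is not a vertex of
`C[v,α]`), and (W2)(b) (layeredness) for an entry/body-labeling to be a
LLEE-witness. -/
structure IsLLEE (C : LChart V A) : Prop where
  w1 : ¬ ∃ f : ℕ → V, f 0 = C.start ∧ ∀ n : ℕ, C.BStep (f n) (f (n + 1))
  w2a_L1 : ∀ (v : V) (α : ℕ), C.HasEntry v α → ∃ f : ℕ → V, C.LoopSeq v α f
  w2a_L2 : ∀ (v : V) (α : ℕ), C.HasEntry v α →
    ∀ f : ℕ → V, C.LoopSeq v α f → ∃ n : ℕ, 0 < n ∧ f n = v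
  w2a_L3 : ∀ (v : V) (α : ℕ), ¬ C.Descends v α C.tick
  w2b : ∀ (v w : V) (α : ℕ), C.Descends v α w → ∀ β : ℕ, α ≤ β → ¬ C.HasEntry w β

/-- `u` and `v` lie in the same strongly connected component. -/
def SameSCC (C : LChart V A) (u v : V) : Prop :=
  Relation.ReflTransGen C.AnyStep u v ∧ Relation.ReflTransGen C.AnyStep v u

/-- `w` loops back to `v`: `v` descends in a loop to `w` and there is a nonempty
path of body transitions from `w` back to `v`. -/
def LoopsBack (C : LChart V A) (w v : V) : Prop :=
  C.Desc v w ∧ Relation.TransGen C.BStep w v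

/-- `w` directly loops back to `v`. -/
def DLoopsBack (C : LChart V A) (w v : V) : Prop :=
  C.LoopsBack w v ∧ ∀ u : V, C.LoopsBack w u → u = v ∨ C.LoopsBack v u

end LChart

section Aux

open Relation

variable {V A : Type}

/-- Reverse a reflexive-transitive chain of the flipped relation. -/
private lemma rtg_rev {r : V → V → Prop} {a b : V}
    (h : Relation.ReflTransGen (fun x y => r y x) a b) :
    Relation.ReflTransGen r b a := by
  induction h with
  | refl => exact .refl
  | tail _ h2 ih => exact Relation.ReflTransGen.head h2 ih

/-- `Descends` is closed under body steps avoiding the loop vertex. -/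
private lemma descends_extend {C : LChart V A} {y z z' : V} {α : ℕ}
    (h : C.Descends y α z)
    (hp : Relation.ReflTransGen (fun x w => C.BStep x w ∧ w ≠ y) z z') :
    C.Descends y α z' := by
  obtain ⟨u0, he, hne, hpath⟩ := h
  exact ⟨u0, he, hne, hpath.trans hp⟩

/-- Either a path avoids `y` (as a target), or it passes through `y` and we get
the entering step and the suffix from `y`. -/
private lemma rtg_split {r : V → V → Prop} (y : V) {a b : V}
    (h : Relation.ReflTransGen r a b) :
    Relation.ReflTransGen (fun p q => r p q ∧ q ≠ y) a b ∨
      ((∃ p, r p y) ∧ Relation.ReflTransGen r y b) := by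
  induction h with
  | refl => exact Or.inl .refl
  | @tail b c h1 h2 ih =>
    by_cases hcy : c = y
    · subst hcy
      exact Or.inr ⟨⟨b, h2⟩, .refl⟩
    · rcases ih with h' | ⟨ex, hyb⟩
      · exact Or.inl (h'.tail ⟨h2, hcy⟩)
      · exact Or.inr ⟨ex, hyb.tail h2⟩

/-- If `v` descends (in finitely many nested loops) to `u`, then any body path
from `u` that avoids `v` ends in a vertex to which `v` also descends. -/
private lemma down_closure {C : LChart V A} {v u : V}
    (hdown : Relation.ReflTransGen C.Desc v u) :
    u ≠ v → ∀ z : V,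
      Relation.ReflTransGen (fun x w => C.BStep x w ∧ w ≠ v) u z →
      Relation.ReflTransGen C.Desc v z := by
  induction hdown with
  | refl => intro hne; exact absurd rfl hne
  | @tail y u' hvy hyu ih =>
    intro _ z hp
    rcases rtg_split y hp with hleft | ⟨⟨p, hpy⟩, hyz⟩
    · obtain ⟨α, hd⟩ := hyu
      have hpath : Relation.ReflTransGen (fun x w => C.BStep x w ∧ w ≠ y) u' z :=
        Relation.ReflTransGen.mono (fun p q hq => ⟨hq.1.1, hq.2⟩) _ _ hleft
      exact hvy.tail ⟨α, descends_extend hd hpath⟩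
    · exact ih hpy.2 z hyz

/-- Along a nonempty chain of descents the entry levels strictly decrease:
the start has an entry of some level `α`, and the end has no entry of level
`≥ α`. -/
private lemma transGen_desc_level {C : LChart V A} (hL : C.IsLLEE) {a b : V}
    (h : Relation.TransGen C.Desc a b) :
    ∃ α : ℕ, C.HasEntry a α ∧ ∀ β : ℕ, α ≤ β → ¬ C.HasEntry b β := by
  induction h with
  | @single c h1 =>
    obtain ⟨α, hdes⟩ := h1
    obtain ⟨u0, he, hne, hp⟩ := hdes
    obtain ⟨a', htr⟩ := he.2
    exact ⟨α, ⟨he.1, a', u0, htr⟩,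
      fun β hβ => hL.w2b _ _ _ ⟨u0, he, hne, hp⟩ β hβ⟩
  | @tail b c h1 h2 ih =>
    obtain ⟨α, hEa, hNb⟩ := ih
    obtain ⟨γ, hdes⟩ := h2
    obtain ⟨u0, he, hne, hp⟩ := hdes
    obtain ⟨a', htr⟩ := he.2
    have hEb : C.HasEntry b γ := ⟨he.1, a', u0, htr⟩
    have hγα : γ < α := by
      by_contra hge
      exact hNb γ (le_of_not_gt hge) hEb
    exact ⟨α, hEa, fun β hβ hc =>
      hL.w2b _ _ _ ⟨u0, he, hne, hp⟩ β (le_of_lt (lt_of_lt_of_le hγα hβ)) hc⟩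

/-- A body chain all of whose elements avoid `v` yields a `v`-avoiding
reflexive-transitive body path to the last element. -/
private lemma chain_to_rtg {C : LChart V A} {v : V} :
    ∀ (u : V) (xs : List V), List.Chain C.BStep u xs → (∀ x ∈ xs, x ≠ v) →
      Relation.ReflTransGen (fun x y => C.BStep x y ∧ y ≠ v) u
        ((u :: xs).getLast (List.cons_ne_nil u xs))
  | u, [], _, _ => by simpa using Relation.ReflTransGen.refl
  | u, a :: l, h, hall => by
    rw [List.getLast_cons (List.cons_ne_nil a l)]
    rcases List.chain_cons.mp h with ⟨hstep, hchain⟩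
    exact Relation.ReflTransGen.head
      ⟨hstep, hall a (List.mem_cons_self (a := a) (l := l))⟩
      (chain_to_rtg a l hchain (fun x hx => hall x (List.mem_cons_of_mem a hx)))

end Aux

/-- If `u ⇢* v ⇢* w`, then every path of body transitions from `u` to `w`
visits `v`. -/
theorem loopsBack_body_path_visits {V A : Type} [Finite V] (C : LChart V A)
    (h : C.IsLLEE) (u v w : V)
    (huv : Relation.ReflTransGen C.LoopsBack u v)
    (hvw : Relation.ReflTransGen C.LoopsBack v w)
    (xs : List V) (hchain : List.Chain C.BStep u xs)
    (hlast : (u :: xs).getLast (List.cons_ne_nil u xs) = w) :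
    v ∈ u :: xs := by
  by_contra hv
  have hu_ne : u ≠ v := fun h => hv (h ▸ List.mem_cons_self (a := u) (l := xs))
  have hall : ∀ x ∈ xs, x ≠ v := fun x hx hxe =>
    hv (hxe ▸ List.mem_cons_of_mem u hx)
  have hw_ne : w ≠ v := fun hwe =>
    hv (hwe ▸ hlast ▸ List.getLast_mem (List.cons_ne_nil u xs))
  have hrtg : Relation.ReflTransGen (fun x y => C.BStep x y ∧ y ≠ v) u w := by
    have := chain_to_rtg u xs hchain hall
    rwa [hlast] at this
  -- v descends (in chains) to u, and w descends (in chains) to v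
  have hdvU : Relation.ReflTransGen C.Desc v u :=
    rtg_rev (Relation.ReflTransGen.mono (fun a b hab => hab.1) _ _ huv)
  have hdwV : Relation.ReflTransGen C.Desc w v :=
    rtg_rev (Relation.ReflTransGen.mono (fun a b hab => hab.1) _ _ hvw)
  -- by the closure property, v descends (in chains) to w
  have hdvW : Relation.ReflTransGen C.Desc v w := down_closure hdvU hu_ne w hrtg
  -- build a nonempty descent cycle at v
  have htvW : Relation.TransGen C.Desc v w := by
    rcases Relation.reflTransGen_iff_eq_or_transGen.mp hdvW with h' | h'
    · exact absurd h' hw_ne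
    · exact h'
  have htvv : Relation.TransGen C.Desc v v := htvW.trans_left hdwV
  obtain ⟨α, hE, hN⟩ := transGen_desc_level h htvv
  exact hN α le_rfl hE
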